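/- Let G = BS(m,n) be the Baumslag–Solitar group with 0 < m ≤ |n|, let d = gcd(m,n), and let μ, ν be positive integers with 1 ≤ μ, ν ≤ d, gcd(μ,ν) = 1 and μ·ν = d. Then [t^{-k} a^μ t^k, a^ν] ∈ γ_ω(G) for all k ∈ ℤ. -/

import Mathlib

def BSRels (m n : ℤ) : Set (FreeGroup (Fin 2)) :=
  {(FreeGroup.of 0)⁻¹ * (FreeGroup.of 1) ^ m * FreeGroup.of 0 * ((FreeGroup.of 1) ^ n)⁻¹}

/-- The Baumslag–Solitar group `BS(m,n) = ⟨t, a ∣ t⁻¹ aᵐ t = aⁿ⟩`. -/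
abbrev BS (m n : ℤ) : Type := PresentedGroup (BSRels m n)

/-- The generator `t` of `BS(m,n)`. -/
def BS.t (m n : ℤ) : BS m n := PresentedGroup.of 0

/-- The generator `a` of `BS(m,n)`. -/
def BS.a (m n : ℤ) : BS m n := PresentedGroup.of 1

/-- `γ_ω(G)`: the intersection of all terms of the lower central series
(`(⊤ : Subgroup G).lowerCentralSeries c` is `γ_{c+1}(G)`). -/
def lcsOmega (G : Type*) [Group G] : Subgroup G := ⨅ c : ℕ, (⊤ : Subgroup G).lowerCentralSeries c

/-- The commutator `[x,y] = x⁻¹y⁻¹xy`. -/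
def commElt {G : Type*} [Group G] (x y : G) : G := x⁻¹ * y⁻¹ * x * y

/-! ### Arithmetic lemmas -/

private lemma keyCore (M μ ν m1 n1 p : ℕ) (hM : 0 < M) (hμ : 0 < μ) (hν : 0 < ν)
    (hm1 : 0 < m1) (hn1 : 0 < n1)
    (hgcd : Nat.gcd M (μ * ν * m1) = Nat.gcd M (μ * ν * n1))
    (hp : p.Prime) (hpμ : ¬ p ∣ μ) (hpm1 : ¬ p ∣ m1) (hpn1 : p ∣ n1) :
    ¬ p ∣ M / Nat.gcd M ν := by
  have hd : μ * ν ≠ 0 := by positivity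
  have hm1' : m1 ≠ 0 := hm1.ne'
  have hn1' : n1 ≠ 0 := hn1.ne'
  have hdm : μ * ν * m1 ≠ 0 := by positivity
  have hdn : μ * ν * n1 ≠ 0 := by positivity
  have hfμ : μ.factorization p = 0 := Nat.factorization_eq_zero_of_not_dvd hpμ
  have hfm1 : m1.factorization p = 0 := Nat.factorization_eq_zero_of_not_dvd hpm1
  have hfn1 : 1 ≤ n1.factorization p := (Nat.Prime.dvd_iff_one_le_factorization hp hn1').mp hpn1
  have e1 : (Nat.gcd M (μ * ν * m1)).factorization p
      = min (M.factorization p) (ν.factorization p) := by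
    rw [Nat.factorization_gcd hM.ne' hdm, Finsupp.inf_apply, Nat.factorization_mul hd hm1',
      Nat.factorization_mul hμ.ne' hν.ne']
    simp [hfμ, hfm1]
  have e2 : (Nat.gcd M (μ * ν * n1)).factorization p
      = min (M.factorization p) (ν.factorization p + n1.factorization p) := by
    rw [Nat.factorization_gcd hM.ne' hdn, Finsupp.inf_apply, Nat.factorization_mul hd hn1',
      Nat.factorization_mul hμ.ne' hν.ne']
    simp [hfμ]
  have e3 : min (M.factorization p) (ν.factorization p)
      = min (M.factorization p) (ν.factorization p + n1.factorization p) := by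
    rw [← e1, ← e2, hgcd]
  have hle : M.factorization p ≤ ν.factorization p := by omega
  intro hdvd
  have hq0 : M / Nat.gcd M ν ≠ 0 := by
    have h1 : 0 < Nat.gcd M ν := Nat.gcd_pos_of_pos_left ν hM
    have h2 : Nat.gcd M ν ≤ M := Nat.le_of_dvd hM (Nat.gcd_dvd_left M ν)
    exact (Nat.div_pos h2 h1).ne'
  have hcontra := (Nat.Prime.dvd_iff_one_le_factorization hp hq0).mp hdvd
  rw [Nat.factorization_div (Nat.gcd_dvd_left M ν), Finsupp.tsub_apply,
    Nat.factorization_gcd hM.ne' hν.ne', Finsupp.inf_apply] at hcontra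
  omega

private lemma keyArith (M μ ν m1 n1 p : ℕ) (hM : 0 < M) (hμ : 0 < μ) (hν : 0 < ν)
    (hm1 : 0 < m1) (hn1 : 0 < n1)
    (hcop : Nat.gcd μ ν = 1) (hcop1 : Nat.gcd m1 n1 = 1)
    (hgcd : Nat.gcd M (μ * ν * m1) = Nat.gcd M (μ * ν * n1))
    (hp : p.Prime) (h1 : p ∣ ν * m1) (h2 : p ∣ μ * n1) :
    ¬ p ∣ M / Nat.gcd M μ ∨ ¬ p ∣ M / Nat.gcd M ν := by
  have hpμν : ¬ (p ∣ μ ∧ p ∣ ν) := by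
    rintro ⟨ha, hb⟩
    exact hp.one_lt.ne' (Nat.dvd_one.mp (hcop ▸ Nat.dvd_gcd ha hb))
  have hpm1n1 : ¬ (p ∣ m1 ∧ p ∣ n1) := by
    rintro ⟨ha, hb⟩
    exact hp.one_lt.ne' (Nat.dvd_one.mp (hcop1 ▸ Nat.dvd_gcd ha hb))
  rcases (Nat.Prime.dvd_mul hp).mp h1 with hpν | hpm1 <;>
    rcases (Nat.Prime.dvd_mul hp).mp h2 with hpμ | hpn1
  · exact absurd ⟨hpμ, hpν⟩ hpμν
  · right
    have hpμ' : ¬ p ∣ μ := fun h => hpμν ⟨h, hpν⟩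
    have hpm1' : ¬ p ∣ m1 := fun h => hpm1n1 ⟨h, hpn1⟩
    exact keyCore M μ ν m1 n1 p hM hμ hν hm1 hn1 hgcd hp hpμ' hpm1' hpn1
  · left
    have hpν' : ¬ p ∣ ν := fun h => hpμν ⟨hpμ, h⟩
    have hpn1' : ¬ p ∣ n1 := fun h => hpm1n1 ⟨hpm1, h⟩
    have hgcd' : Nat.gcd M (ν * μ * n1) = Nat.gcd M (ν * μ * m1) := by
      rw [mul_comm ν μ]; exact hgcd.symm
    exact keyCore M ν μ n1 m1 p hM hν hμ hn1 hm1 hgcd' hp hpν' hpn1' hpm1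
  · exact absurd ⟨hpm1, hpn1⟩ hpm1n1

private lemma order_kill (Kc M μa νa m1a n1a : ℕ) (k' : ℕ)
    (hM : 0 < M) (hμ : 0 < μa) (hν : 0 < νa) (hm1 : 0 < m1a) (hn1 : 0 < n1a)
    (hcop : Nat.gcd μa νa = 1) (hcop1 : Nat.gcd m1a n1a = 1)
    (hgcd : Nat.gcd M (μa * νa * m1a) = Nat.gcd M (μa * νa * n1a))
    (h1 : Kc ∣ (νa * m1a) ^ k') (h2 : Kc ∣ (μa * n1a) ^ k')
    (h3 : Kc ∣ M / Nat.gcd M μa) (h4 : Kc ∣ M / Nat.gcd M νa) : Kc = 1 := by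
  by_contra hne
  obtain ⟨p, hp, hpK⟩ := Nat.exists_prime_and_dvd hne
  rcases Nat.eq_zero_or_pos k' with rfl | hk'
  · rw [pow_zero] at h1
    exact hne (Nat.dvd_one.mp h1)
  · have hp1 : p ∣ νa * m1a := hp.dvd_of_dvd_pow (hpK.trans h1)
    have hp2 : p ∣ μa * n1a := hp.dvd_of_dvd_pow (hpK.trans h2)
    rcases keyArith M μa νa m1a n1a p hM hμ hν hm1 hn1 hcop hcop1 hgcd hp hp1 hp2 with h | h
    · exact h (hpK.trans h3)
    · exact h (hpK.trans h4)

private lemma order_kill' (Kc μa νa : ℕ) (k' : ℕ) (hcop : Nat.gcd μa νa = 1)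
    (h1 : Kc ∣ νa ^ k') (h2 : Kc ∣ μa ^ k') : Kc = 1 := by
  have hg : Nat.Coprime (νa ^ k') (μa ^ k') :=
    Nat.Coprime.pow k' k' (Nat.Coprime.symm hcop)

  exact Nat.dvd_one.mp (hg ▸ Nat.dvd_gcd h1 h2)

/-! ### Group-theoretic helpers -/

section CommHelpers
variable {G : Type*} [Group G]

private lemma commElt_def (x y : G) : commElt x y = x⁻¹ * y⁻¹ * x * y := rfl

private lemma commElt_one_left (y : G) : commElt (1 : G) y = 1 := by
  simp [commElt]

private lemma commElt_one_right (x : G) : commElt x (1 : G) = 1 := by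
  simp [commElt]

private lemma commElt_eq_one_of_commute {x y : G} (h : Commute x y) : commElt x y = 1 := by
  have hy : y⁻¹ * x = x * y⁻¹ := (h.inv_right.symm).eq
  rw [commElt_def, mul_assoc x⁻¹, hy]
  group

private lemma inv_conj_zpow (g x : G) (p : ℤ) : (g⁻¹ * x * g) ^ p = g⁻¹ * x ^ p * g := by
  simpa using conj_zpow (i := p) (a := g⁻¹) (b := x)

private lemma commElt_conj (g x y : G) :
    commElt (g⁻¹ * x * g) (g⁻¹ * y * g) = g⁻¹ * commElt x y * g := by
  simp only [commElt_def]; group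

private lemma commElt_zpow_left {x y : G} (hz : ∀ g : G, Commute (commElt x y) g) (p : ℤ) :
    commElt (x ^ p) y = commElt x y ^ p := by
  have h1 : y⁻¹ * x * y = x * commElt x y := by rw [commElt_def]; group
  have h2 : (y⁻¹ * x * y) ^ p = y⁻¹ * x ^ p * y := by
    simpa using conj_zpow (i := p) (a := y⁻¹) (b := x)
  have h3 : (x * commElt x y) ^ p = x ^ p * commElt x y ^ p := ((hz x).symm).mul_zpow p
  calc commElt (x ^ p) y = (x ^ p)⁻¹ * (y⁻¹ * x ^ p * y) := by rw [commElt_def]; group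
    _ = (x ^ p)⁻¹ * ((y⁻¹ * x * y) ^ p) := by rw [h2]
    _ = (x ^ p)⁻¹ * (x ^ p * commElt x y ^ p) := by rw [h1, h3]
    _ = commElt x y ^ p := by group

private lemma commElt_zpow_right {x y : G} (hz : ∀ g : G, Commute (commElt x y) g) (q : ℤ) :
    commElt x (y ^ q) = commElt x y ^ q := by
  have h1 : x⁻¹ * y * x = y * (commElt x y)⁻¹ := by rw [commElt_def]; group
  have h2 : (x⁻¹ * y * x) ^ q = x⁻¹ * y ^ q * x := by
    simpa using conj_zpow (i := q) (a := x⁻¹) (b := y)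
  have h3 : (y * (commElt x y)⁻¹) ^ q = y ^ q * ((commElt x y)⁻¹) ^ q :=
    ((hz y).inv_left.symm).mul_zpow q
  calc commElt x (y ^ q) = (x⁻¹ * y ^ q * x)⁻¹ * y ^ q := by rw [commElt_def]; group
    _ = ((x⁻¹ * y * x) ^ q)⁻¹ * y ^ q := by rw [h2]
    _ = (y ^ q * ((commElt x y)⁻¹) ^ q)⁻¹ * y ^ q := by rw [h1, h3]
    _ = commElt x y ^ q := by group

open scoped commutatorElement in
private lemma mk_commute_of_mem_lcs {i : ℕ} {g : G} (hg : g ∈ (⊤ : Subgroup G).lowerCentralSeries i)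
    (x : G ⧸ (⊤ : Subgroup G).lowerCentralSeries (i + 1)) :
    Commute ((QuotientGroup.mk' ((⊤ : Subgroup G).lowerCentralSeries (i + 1))) g) x := by
  refine QuotientGroup.induction_on x (fun h => ?_)
  have hmem : ⁅g, h⁆ ∈ (⊤ : Subgroup G).lowerCentralSeries (i + 1) := by
    rw [Subgroup.lowerCentralSeries_succ]
    exact Subgroup.commutator_mem_commutator hg (Subgroup.mem_top h)
  have h1 : ⁅(QuotientGroup.mk' ((⊤ : Subgroup G).lowerCentralSeries (i + 1))) g,
      (QuotientGroup.mk' ((⊤ : Subgroup G).lowerCentralSeries (i + 1))) h⁆ = 1 := by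
    rw [← map_commutatorElement]
    exact (QuotientGroup.eq_one_iff ⁅g, h⁆).mpr hmem
  exact commutatorElement_eq_one_iff_commute.mp h1

private lemma orderOf_dvd_natAbs {H : Type*} [Group H] (x : H) (z : ℤ) (h : x ^ z = 1) :
    orderOf x ∣ z.natAbs := by
  apply orderOf_dvd_of_pow_eq_one
  rcases Int.natAbs_eq z with he | he
  · rw [← zpow_natCast, ← he, h]
  · have h2 : (z.natAbs : ℤ) = -z := by omega
    rw [← zpow_natCast, h2, zpow_neg, h, inv_one]

private lemma chain_closed {H : Type*} [Group H] (f : ℤ → H) (u v : ℤ)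
    (h : ∀ j : ℤ, f (j + 1) ^ u = f j ^ v) (h0 : f 0 = 1) :
    (∀ k : ℕ, f (k : ℤ) ^ (u ^ k) = 1) ∧ (∀ k : ℕ, f (-(k : ℤ)) ^ (v ^ k) = 1) := by
  constructor
  · intro k
    induction k with
    | zero => simpa using congrArg (· ^ (1 : ℤ)) h0
    | succ k ih =>
      have hcast : ((k + 1 : ℕ) : ℤ) = (k : ℤ) + 1 := by push_cast; ring
      calc f ((k + 1 : ℕ) : ℤ) ^ (u ^ (k + 1))
          = (f ((k : ℤ) + 1) ^ u) ^ (u ^ k) := by rw [hcast, pow_succ', zpow_mul]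
        _ = (f (k : ℤ) ^ v) ^ (u ^ k) := by rw [h k]
        _ = (f (k : ℤ) ^ (u ^ k)) ^ v := by rw [← zpow_mul, ← zpow_mul, mul_comm]
        _ = 1 := by rw [ih, one_zpow]
  · intro k
    induction k with
    | zero => simpa using congrArg (· ^ (1 : ℤ)) h0
    | succ k ih =>
      have h' := h (-((k + 1 : ℕ) : ℤ))
      have hcast : (-((k + 1 : ℕ) : ℤ)) + 1 = -(k : ℤ) := by push_cast; ring
      rw [hcast] at h'
      calc f (-((k + 1 : ℕ) : ℤ)) ^ (v ^ (k + 1))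
          = (f (-((k + 1 : ℕ) : ℤ)) ^ v) ^ (v ^ k) := by rw [pow_succ', zpow_mul]
        _ = (f (-(k : ℤ)) ^ u) ^ (v ^ k) := by rw [← h']
        _ = (f (-(k : ℤ)) ^ (v ^ k)) ^ u := by rw [← zpow_mul, ← zpow_mul, mul_comm]
        _ = 1 := by rw [ih, one_zpow]

end CommHelpers

/-! ### The conjugates `b_k = t^{-k} a t^k` -/

section BbSection
variable {G : Type*} [Group G]

private def Bb (t a : G) (k : ℤ) : G := t ^ (-k) * a * t ^ k

private lemma Bb_zero (t a : G) : Bb t a 0 = a := by simp [Bb]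

private lemma Bb_succ (t a : G) (k : ℤ) : Bb t a (k + 1) = t⁻¹ * Bb t a k * t := by
  unfold Bb
  rw [show -(k + 1) = -1 + -k by ring, zpow_add, show k + 1 = k + 1 from rfl, zpow_add,
    zpow_neg_one, zpow_one]
  group

private lemma Bb_zpow (t a : G) (k x : ℤ) : (Bb t a k) ^ x = t ^ (-k) * a ^ x * t ^ k := by
  unfold Bb
  rw [zpow_neg t k, inv_conj_zpow]

private lemma Bb_rel (t a : G) (m n : ℤ) (hrel : t⁻¹ * a ^ m * t = a ^ n) (k : ℤ) :
    (Bb t a (k + 1)) ^ m = (Bb t a k) ^ n := by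
  rw [Bb_zpow, Bb_zpow]
  rw [show -(k + 1) = -k + -1 by ring, zpow_add, show k + 1 = 1 + k by ring, zpow_add,
    zpow_neg_one, zpow_one, ← hrel]
  group

private lemma a_tor (t a : G) (m n : ℤ) (hrel : t⁻¹ * a ^ m * t = a ^ n) :
    ∀ i : ℕ, a ^ ((n - m) ^ i) ∈ (⊤ : Subgroup G).lowerCentralSeries i := by
  intro i
  induction i with
  | zero => simp [Subgroup.lowerCentralSeries]
  | succ i ih =>
    set N := (⊤ : Subgroup G).lowerCentralSeries (i + 1) with hN
    set φ := QuotientGroup.mk' N with hφ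
    have key : φ (a ^ ((n - m) ^ (i + 1))) = 1 := by
      have hz : ∀ x : G ⧸ N, Commute (φ (a ^ ((n - m) ^ i))) x :=
        fun x => mk_commute_of_mem_lcs ih x
      set z := φ (a ^ ((n - m) ^ i)) with hzdef
      have egrp : t⁻¹ * (a ^ ((n - m) ^ i)) ^ m * t = (a ^ ((n - m) ^ i)) ^ n := by
        rw [← zpow_mul, ← zpow_mul]
        have h2 : t⁻¹ * a ^ ((n - m) ^ i * m) * t = (t⁻¹ * a ^ m * t) ^ ((n - m) ^ i) := by
          rw [inv_conj_zpow, ← zpow_mul, mul_comm]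
        rw [h2, hrel, ← zpow_mul, mul_comm]
      have e1 : (φ t)⁻¹ * z ^ m * (φ t) = z ^ n := by
        rw [hzdef, ← map_zpow, ← map_zpow, ← map_inv, ← map_mul, ← map_mul, egrp]
      have hcomm : Commute (z ^ m) (φ t) := (hz (φ t)).zpow_left m
      have e2 : z ^ n = z ^ m := by
        rw [← e1, mul_assoc, hcomm.eq, ← mul_assoc, inv_mul_cancel, one_mul]
      have e3 : z ^ (n - m) = 1 := by
        rw [zpow_sub, e2, mul_inv_cancel]
      have e4 : φ (a ^ ((n - m) ^ (i + 1))) = z ^ (n - m) := by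
        rw [hzdef, ← map_zpow, ← zpow_mul, ← pow_succ]
      rw [e4, e3]
    exact (QuotientGroup.eq_one_iff _).mp key

end BbSection

/-! ### Main induction -/

private lemma main_comm {G : Type*} [Group G] (t a : G) (m n μt νt m1 n1 : ℤ)
    (hμ : 0 < μt) (hν : 0 < νt) (hm1 : 0 < m1) (hn1 : n1 ≠ 0)
    (hcop : Int.gcd μt νt = 1) (hcop1 : Int.gcd m1 n1 = 1)
    (hm : m = μt * νt * m1) (hn : n = μt * νt * n1)
    (hrel : t⁻¹ * a ^ m * t = a ^ n) :
    ∀ (i : ℕ) (k : ℤ), commElt ((Bb t a k) ^ μt) (a ^ νt) ∈ (⊤ : Subgroup G).lowerCentralSeries i := by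
  intro i
  induction i with
  | zero => intro k; simp [Subgroup.lowerCentralSeries]
  | succ i IH =>
    intro k
    set N := (⊤ : Subgroup G).lowerCentralSeries (i + 1) with hNdef
    set φ := QuotientGroup.mk' N with hφ
    have mapcomm : ∀ x y : G, φ (commElt x y) = commElt (φ x) (φ y) := by
      intro x y; simp [commElt_def, map_mul, map_inv]
    have hcmk : ∀ j : ℤ, φ (commElt ((Bb t a j) ^ μt) (a ^ νt))
        = commElt ((φ (Bb t a j)) ^ μt) ((φ a) ^ νt) := by
      intro j; rw [mapcomm, map_zpow, map_zpow]
    have hcent' : ∀ j : ℤ, ∀ x : G ⧸ N,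
        Commute (commElt ((φ (Bb t a j)) ^ μt) ((φ a) ^ νt)) x := by
      intro j x; rw [← hcmk j]; exact mk_commute_of_mem_lcs (IH j) x
    have hB0 : Bb t a 0 = a := Bb_zero t a
    have hβ : ∀ j : ℤ, (φ (Bb t a (j + 1))) ^ m = (φ (Bb t a j)) ^ n := by
      intro j; rw [← map_zpow, ← map_zpow, Bb_rel t a m n hrel j]
    have hβ0 : (φ a) ^ n = (φ (Bb t a 1)) ^ m := by
      have h := hβ 0
      rw [zero_add, hB0] at h
      exact h.symm
    have hc0 : commElt ((φ (Bb t a (0 : ℤ))) ^ μt) ((φ a) ^ νt) = 1 := by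
      rw [hB0]
      exact commElt_eq_one_of_commute (((Commute.refl (φ a)).zpow_left μt).zpow_right νt)
    -- chain relation (1)
    have D1 : ∀ j : ℤ, commElt ((φ (Bb t a (j + 1))) ^ μt) ((φ a) ^ νt) ^ (νt * m1)
        = commElt ((φ (Bb t a j)) ^ μt) ((φ a) ^ νt) ^ (νt * n1) := by
      intro j
      rw [← commElt_zpow_left (hcent' (j + 1)) (νt * m1),
        ← commElt_zpow_left (hcent' j) (νt * n1), ← zpow_mul, ← zpow_mul,
        show μt * (νt * m1) = m by rw [hm]; ring,
        show μt * (νt * n1) = n by rw [hn]; ring, hβ j]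
    -- conjugated commutators
    have hconjG : ∀ j : ℤ, commElt ((Bb t a j) ^ μt) ((Bb t a 1) ^ νt)
        = t⁻¹ * commElt ((Bb t a (j - 1)) ^ μt) (a ^ νt) * t := by
      intro j
      have h1 : Bb t a j = t⁻¹ * Bb t a (j - 1) * t := by
        have h := Bb_succ t a (j - 1); rw [sub_add_cancel] at h; exact h
      have h2 : Bb t a 1 = t⁻¹ * a * t := by
        have h := Bb_succ t a 0; rw [zero_add, hB0] at h; exact h
      rw [h1, h2, inv_conj_zpow, inv_conj_zpow, commElt_conj]
    have hz'mem : ∀ j : ℤ, commElt ((Bb t a j) ^ μt) ((Bb t a 1) ^ νt)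
        ∈ (⊤ : Subgroup G).lowerCentralSeries i := by
      intro j
      rw [hconjG j]
      have hnorm : ((⊤ : Subgroup G).lowerCentralSeries i).Normal := inferInstance
      simpa using hnorm.conj_mem _ (IH (j - 1)) t⁻¹
    have hcentz : ∀ j : ℤ, ∀ x : G ⧸ N,
        Commute (commElt ((φ (Bb t a j)) ^ μt) ((φ (Bb t a 1)) ^ νt)) x := by
      intro j x
      have h : φ (commElt ((Bb t a j) ^ μt) ((Bb t a 1) ^ νt))
          = commElt ((φ (Bb t a j)) ^ μt) ((φ (Bb t a 1)) ^ νt) := by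
        rw [mapcomm, map_zpow, map_zpow]
      rw [← h]; exact mk_commute_of_mem_lcs (hz'mem j) x
    have hz'eq : ∀ j : ℤ, commElt ((φ (Bb t a j)) ^ μt) ((φ (Bb t a 1)) ^ νt)
        = commElt ((φ (Bb t a (j - 1))) ^ μt) ((φ a) ^ νt) := by
      intro j
      have e := congrArg φ (hconjG j)
      rw [mapcomm, map_zpow, map_zpow, map_mul, map_mul, map_inv, mapcomm, map_zpow,
        map_zpow] at e
      rw [e]
      have hcomm := hcent' (j - 1) (φ t)
      rw [mul_assoc, hcomm.eq, ← mul_assoc, inv_mul_cancel, one_mul]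
    -- chain relation (2)
    have D2 : ∀ j : ℤ, commElt ((φ (Bb t a (j + 1))) ^ μt) ((φ a) ^ νt) ^ (μt * n1)
        = commElt ((φ (Bb t a j)) ^ μt) ((φ a) ^ νt) ^ (μt * m1) := by
      intro j
      calc commElt ((φ (Bb t a (j + 1))) ^ μt) ((φ a) ^ νt) ^ (μt * n1)
          = commElt ((φ (Bb t a (j + 1))) ^ μt) (((φ a) ^ νt) ^ (μt * n1)) :=
            (commElt_zpow_right (hcent' (j + 1)) _).symm
        _ = commElt ((φ (Bb t a (j + 1))) ^ μt) (((φ (Bb t a 1)) ^ νt) ^ (μt * m1)) := by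
            rw [← zpow_mul, ← zpow_mul, show νt * (μt * n1) = n by rw [hn]; ring,
              show νt * (μt * m1) = m by rw [hm]; ring, hβ0]
        _ = commElt ((φ (Bb t a (j + 1))) ^ μt) ((φ (Bb t a 1)) ^ νt) ^ (μt * m1) :=
            commElt_zpow_right (hcentz (j + 1)) _
        _ = commElt ((φ (Bb t a j)) ^ μt) ((φ a) ^ νt) ^ (μt * m1) := by
            rw [hz'eq (j + 1), add_sub_cancel_right]
    -- closed chains
    obtain ⟨hA, hA'⟩ := chain_closed (fun j => commElt ((φ (Bb t a j)) ^ μt) ((φ a) ^ νt))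
      (νt * m1) (νt * n1) D1 hc0
    obtain ⟨hB, hB'⟩ := chain_closed (fun j => commElt ((φ (Bb t a j)) ^ μt) ((φ a) ^ νt))
      (μt * n1) (μt * m1) D2 hc0
    -- natAbs data
    set μa := μt.natAbs with hμa
    set νa := νt.natAbs with hνa
    set m1a := m1.natAbs with hm1a
    set n1a := n1.natAbs with hn1a
    have hμapos : 0 < μa := Int.natAbs_pos.mpr hμ.ne'
    have hνapos : 0 < νa := Int.natAbs_pos.mpr hν.ne'
    have hm1apos : 0 < m1a := Int.natAbs_pos.mpr hm1.ne'
    have hn1apos : 0 < n1a := Int.natAbs_pos.mpr hn1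
    have hcopN : Nat.gcd μa νa = 1 := hcop
    have hcop1N : Nat.gcd m1a n1a = 1 := hcop1
    -- the goal
    suffices hck : commElt ((φ (Bb t a k)) ^ μt) ((φ a) ^ νt) = 1 by
      have h1 : φ (commElt ((Bb t a k) ^ μt) (a ^ νt)) = 1 := by rw [hcmk k, hck]
      exact (QuotientGroup.eq_one_iff _).mp h1
    rw [← orderOf_eq_one_iff]
    set Kc := orderOf (commElt ((φ (Bb t a k)) ^ μt) ((φ a) ^ νt)) with hKc
    obtain ⟨k', hk'⟩ : ∃ k' : ℕ, k = (k' : ℤ) ∨ k = -(k' : ℤ) :=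
      ⟨k.natAbs, Int.natAbs_eq k⟩
    -- divisibility from chains
    have hdvd1 : (Kc ∣ (νa * m1a) ^ k' ∧ Kc ∣ (μa * n1a) ^ k')
        ∨ (Kc ∣ (νa * n1a) ^ k' ∧ Kc ∣ (μa * m1a) ^ k') := by
      rcases hk' with hk' | hk'
      · left
        constructor
        · have h := hA k'
          rw [← hk'] at h
          have := orderOf_dvd_natAbs _ _ h
          rwa [Int.natAbs_pow, Int.natAbs_mul] at this
        · have h := hB k'
          rw [← hk'] at h
          have := orderOf_dvd_natAbs _ _ h
          rwa [Int.natAbs_pow, Int.natAbs_mul] at this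
      · right
        constructor
        · have h := hA' k'
          rw [← hk'] at h
          have := orderOf_dvd_natAbs _ _ h
          rwa [Int.natAbs_pow, Int.natAbs_mul] at this
        · have h := hB' k'
          rw [← hk'] at h
          have := orderOf_dvd_natAbs _ _ h
          rwa [Int.natAbs_pow, Int.natAbs_mul] at this
    by_cases hcase : m1 = n1
    · -- n = m : the exponents are already coprime
      have hm11 : m1a = 1 := by
        have h := hcop1
        rw [← hcase, Int.gcd_self] at h
        exact h
      have hn11 : n1a = 1 := by rw [hn1a, ← hcase]; exact hm11
      rcases hdvd1 with ⟨h1, h2⟩ | ⟨h1, h2⟩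
      · rw [hm11, mul_one] at h1; rw [hn11, mul_one] at h2
        exact order_kill' Kc μa νa k' hcopN h1 h2
      · rw [hn11, mul_one] at h1; rw [hm11, mul_one] at h2
        exact order_kill' Kc μa νa k' hcopN h1 h2
    · -- n ≠ m : use the finite order of a in the quotient
      have hnm : n - m ≠ 0 := by
        rw [hm, hn, show μt * νt * n1 - μt * νt * m1 = μt * νt * (n1 - m1) by ring] at *
        exact mul_ne_zero (by positivity) (sub_ne_zero.mpr fun h => hcase h.symm)
      have htor := a_tor t a m n hrel (i + 1)
      have h1 : (φ a) ^ ((n - m) ^ (i + 1)) = 1 := by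
        rw [← map_zpow]
        exact (QuotientGroup.eq_one_iff _).mpr htor
      set M := orderOf (φ a) with hM
      have hMdvd : M ∣ ((n - m) ^ (i + 1)).natAbs := orderOf_dvd_natAbs _ _ h1
      have hMpos : 0 < M := by
        rcases Nat.eq_zero_or_pos M with h | h
        · exfalso
          rw [h] at hMdvd
          exact Int.natAbs_ne_zero.mpr (pow_ne_zero _ hnm) (Nat.eq_zero_of_zero_dvd hMdvd)
        · exact h
      -- gcd M |m| = gcd M |n|
      have hmpos : 0 < m := by rw [hm]; positivity
      have hnne : n ≠ 0 := by
        rw [hn]; exact mul_ne_zero (by positivity) hn1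
      have hrelφ : (φ t)⁻¹ * (φ a) ^ m * (φ t) = (φ a) ^ n := by
        rw [← map_zpow, ← map_zpow, ← map_inv, ← map_mul, ← map_mul, hrel]
      have horder : orderOf ((φ a) ^ m) = orderOf ((φ a) ^ n) := by
        rw [← hrelφ]
        have hconj : (φ t)⁻¹ * (φ a) ^ m * (φ t)
            = (MulAut.conj ((φ t)⁻¹)) ((φ a) ^ m) := by
          simp [MulAut.conj_apply]
        rw [hconj]
        have := orderOf_injective (MulAut.conj ((φ t)⁻¹)).toMonoidHom
          (MulEquiv.injective _) ((φ a) ^ m)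
        simpa using this.symm
      have hordm : orderOf ((φ a) ^ m) = M / Nat.gcd M m.natAbs := by
        have hcast : (φ a) ^ m = (φ a) ^ (m.natAbs) := by
          rw [← zpow_natCast]; congr 1; omega
        rw [hcast, orderOf_pow' _ (Int.natAbs_ne_zero.mpr hmpos.ne'), hM]
      have hordn : orderOf ((φ a) ^ n) = M / Nat.gcd M n.natAbs := by
        have hcast : orderOf ((φ a) ^ n) = orderOf ((φ a) ^ (n.natAbs)) := by
          rcases Int.natAbs_eq n with he | he
          · conv_lhs => rw [he]
            rw [zpow_natCast]
          · conv_lhs => rw [he]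
            rw [zpow_neg, zpow_natCast, orderOf_inv]
        rw [hcast, orderOf_pow' _ (Int.natAbs_ne_zero.mpr hnne), hM]
      have hMgcd : Nat.gcd M m.natAbs = Nat.gcd M n.natAbs := by
        have heq : M / Nat.gcd M m.natAbs = M / Nat.gcd M n.natAbs := by
          rw [← hordm, ← hordn, horder]
        have d1 := Nat.div_div_self (Nat.gcd_dvd_left M m.natAbs) hMpos.ne'
        have d2 := Nat.div_div_self (Nat.gcd_dvd_left M n.natAbs) hMpos.ne'
        rw [← d1, ← d2, heq]
      have hmabs : m.natAbs = μa * νa * m1a := by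
        rw [hm, Int.natAbs_mul, Int.natAbs_mul]
      have hnabs : n.natAbs = μa * νa * n1a := by
        rw [hn, Int.natAbs_mul, Int.natAbs_mul]
      have hgcdN : Nat.gcd M (μa * νa * m1a) = Nat.gcd M (μa * νa * n1a) := by
        rw [← hmabs, ← hnabs]; exact hMgcd
      -- torsion relations on the commutator
      have hC : ∀ j : ℤ, commElt ((φ (Bb t a j)) ^ μt) ((φ a) ^ νt)
          ^ ((M / Nat.gcd M μa : ℕ) : ℤ) = 1 := by
        intro j
        have hgdvdM : Nat.gcd M μa ∣ M := Nat.gcd_dvd_left _ _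
        have hgdvdμ : Nat.gcd M μa ∣ μa := Nat.gcd_dvd_right _ _
        have hNat : μa * (M / Nat.gcd M μa) = M * (μa / Nat.gcd M μa) := by
          rw [← Nat.mul_div_assoc _ hgdvdM, ← Nat.mul_div_assoc _ hgdvdμ, mul_comm]
        have hP : μt * ((M / Nat.gcd M μa : ℕ) : ℤ)
            = (M : ℤ) * ((μa / Nat.gcd M μa : ℕ) : ℤ) := by
          have hμcast : (μa : ℤ) = μt := Int.natAbs_of_nonneg hμ.le
          rw [← hμcast, ← Nat.cast_mul, ← Nat.cast_mul, hNat]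
        have hBk : (φ (Bb t a j)) ^ (M : ℤ) = 1 := by
          rw [← map_zpow, Bb_zpow, map_mul, map_mul, map_zpow, map_zpow, map_zpow,
            zpow_natCast, hM, pow_orderOf_eq_one]
          simp [← zpow_add]
        have hpow : ((φ (Bb t a j)) ^ μt) ^ ((M / Nat.gcd M μa : ℕ) : ℤ) = 1 := by
          rw [← zpow_mul, hP, zpow_mul, hBk, one_zpow]
        calc commElt ((φ (Bb t a j)) ^ μt) ((φ a) ^ νt) ^ ((M / Nat.gcd M μa : ℕ) : ℤ)
            = commElt (((φ (Bb t a j)) ^ μt) ^ ((M / Nat.gcd M μa : ℕ) : ℤ)) ((φ a) ^ νt) :=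
              (commElt_zpow_left (hcent' j) _).symm
          _ = 1 := by rw [hpow, commElt_one_left]
      have hD : ∀ j : ℤ, commElt ((φ (Bb t a j)) ^ μt) ((φ a) ^ νt)
          ^ ((M / Nat.gcd M νa : ℕ) : ℤ) = 1 := by
        intro j
        have hgdvdM : Nat.gcd M νa ∣ M := Nat.gcd_dvd_left _ _
        have hgdvdν : Nat.gcd M νa ∣ νa := Nat.gcd_dvd_right _ _
        have hNat : νa * (M / Nat.gcd M νa) = M * (νa / Nat.gcd M νa) := by
          rw [← Nat.mul_div_assoc _ hgdvdM, ← Nat.mul_div_assoc _ hgdvdν, mul_comm]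
        have hP : νt * ((M / Nat.gcd M νa : ℕ) : ℤ)
            = (M : ℤ) * ((νa / Nat.gcd M νa : ℕ) : ℤ) := by
          have hνcast : (νa : ℤ) = νt := Int.natAbs_of_nonneg hν.le
          rw [← hνcast, ← Nat.cast_mul, ← Nat.cast_mul, hNat]
        have hak : ((φ a) ^ νt) ^ ((M / Nat.gcd M νa : ℕ) : ℤ) = 1 := by
          have haM : (φ a) ^ ((M : ℕ) : ℤ) = 1 := by
            rw [zpow_natCast, hM, pow_orderOf_eq_one]
          rw [← zpow_mul, hP, zpow_mul, haM, one_zpow]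
        calc commElt ((φ (Bb t a j)) ^ μt) ((φ a) ^ νt) ^ ((M / Nat.gcd M νa : ℕ) : ℤ)
            = commElt ((φ (Bb t a j)) ^ μt) (((φ a) ^ νt) ^ ((M / Nat.gcd M νa : ℕ) : ℤ)) :=
              (commElt_zpow_right (hcent' j) _).symm
          _ = 1 := by rw [hak, commElt_one_right]
      have hKC : Kc ∣ M / Nat.gcd M μa := by
        have := orderOf_dvd_natAbs _ _ (hC k)
        simpa [-Int.natCast_ediv] using this
      have hKD : Kc ∣ M / Nat.gcd M νa := by
        have := orderOf_dvd_natAbs _ _ (hD k)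
        simpa [-Int.natCast_ediv] using this
      rcases hdvd1 with ⟨h1, h2⟩ | ⟨h1, h2⟩
      · exact order_kill Kc M μa νa m1a n1a k' hMpos hμapos hνapos hm1apos hn1apos
          hcopN hcop1N hgcdN h1 h2 hKC hKD
      · exact order_kill Kc M μa νa n1a m1a k' hMpos hμapos hνapos hn1apos hm1apos
          hcopN (Nat.Coprime.symm hcop1N) hgcdN.symm h1 h2 hKC hKD

/-! ### The relation in `BS(m,n)` -/

private lemma BS_rel (m n : ℤ) :
    (BS.t m n)⁻¹ * (BS.a m n) ^ m * (BS.t m n) = (BS.a m n) ^ n := by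
  have hmem : ((FreeGroup.of 0)⁻¹ * (FreeGroup.of 1) ^ m * FreeGroup.of 0
      * ((FreeGroup.of 1) ^ n)⁻¹ : FreeGroup (Fin 2))
      ∈ Subgroup.normalClosure (BSRels m n) :=
    Subgroup.subset_normalClosure rfl
  have h1 : PresentedGroup.mk (BSRels m n) ((FreeGroup.of 0)⁻¹ * (FreeGroup.of 1) ^ m
      * FreeGroup.of 0 * ((FreeGroup.of 1) ^ n)⁻¹) = 1 :=
    (QuotientGroup.eq_one_iff _).mpr hmem
  simp only [map_mul, map_inv, map_zpow] at h1
  have h2 : (BS.t m n)⁻¹ * (BS.a m n) ^ m * (BS.t m n) * ((BS.a m n) ^ n)⁻¹ = 1 := h1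
  calc (BS.t m n)⁻¹ * (BS.a m n) ^ m * (BS.t m n)
      = ((BS.t m n)⁻¹ * (BS.a m n) ^ m * (BS.t m n) * ((BS.a m n) ^ n)⁻¹) * (BS.a m n) ^ n := by
        group
    _ = (BS.a m n) ^ n := by rw [h2]; group

theorem stmt13 (m n : ℤ) (hm : 0 < m) (hmn : m ≤ |n|) (d : ℕ) (hd : (d : ℤ) = Int.gcd m n)
    (μ ν : ℕ) (hμ : 1 ≤ μ) (hν : 1 ≤ ν) (hμd : μ ≤ d) (hνd : ν ≤ d)
    (hcop : Nat.gcd μ ν = 1) (hμν : μ * ν = d) (k : ℤ) :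
    commElt ((BS.t m n) ^ (-k) * (BS.a m n) ^ (μ : ℤ) * (BS.t m n) ^ k) ((BS.a m n) ^ (ν : ℤ))
      ∈ lcsOmega (BS m n) := by
  simp only [lcsOmega, Subgroup.mem_iInf]
  intro c
  set t := BS.t m n with ht
  set a := BS.a m n with ha
  have hnne : n ≠ 0 := by
    intro h; rw [h] at hmn; simp at hmn; omega
  have hgcdpos : 0 < Int.gcd m n := Int.gcd_pos_of_ne_zero_left n hm.ne'
  have hdvdm : (d : ℤ) ∣ m := by rw [hd]; exact Int.gcd_dvd_left m n
  have hdvdn : (d : ℤ) ∣ n := by rw [hd]; exact Int.gcd_dvd_right m n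
  set m1 := m / (d : ℤ) with hm1def
  set n1 := n / (d : ℤ) with hn1def
  have hdcast : (d : ℤ) = (μ : ℤ) * (ν : ℤ) := by
    rw [← hμν]; push_cast; ring
  have hmfact : m = (μ : ℤ) * (ν : ℤ) * m1 := by
    rw [← hdcast, hm1def, Int.mul_ediv_cancel' hdvdm]
  have hnfact : n = (μ : ℤ) * (ν : ℤ) * n1 := by
    rw [← hdcast, hn1def, Int.mul_ediv_cancel' hdvdn]
  have hμpos : (0 : ℤ) < (μ : ℤ) := by exact_mod_cast hμ
  have hνpos : (0 : ℤ) < (ν : ℤ) := by exact_mod_cast hν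
  have hm1pos : 0 < m1 := by
    rcases le_or_gt m1 0 with h | h
    · exfalso; nlinarith [mul_pos hμpos hνpos]
    · exact h
  have hn1ne : n1 ≠ 0 := by
    intro h
    rw [h, mul_zero] at hnfact
    exact hnne hnfact
  have hcop1 : Int.gcd m1 n1 = 1 := by
    rw [hm1def, hn1def, hd]
    exact Int.gcd_div_gcd_div_gcd hgcdpos
  have hcopμν : Int.gcd (μ : ℤ) (ν : ℤ) = 1 := by
    rw [Int.gcd_natCast_natCast]; exact hcop
  have hrel := BS_rel m n
  have hmain := main_comm t a m n (μ : ℤ) (ν : ℤ) m1 n1 hμpos hνpos hm1pos hn1ne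
    hcopμν hcop1 hmfact hnfact hrel c k
  rwa [Bb_zpow] at hmain
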